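/- (Rejection-sampling compression) Let Alice and Referee share N = 2^{2rk/δ} i.i.d. public random samples from distribution Q, where r = 4/δ and k = D(P‖Q)+1 for a target distribution P with c = D(P‖Q) < ∞ and δ > 0. Then Alice can send O(c/δ² + log(1/δ)/δ²) bits to Referee, after which Referee holds a sample from a distribution P' with ‖P − P'‖₁ ≤ δ. -/

import Mathlib

open Matrix BigOperators
open scoped Kronecker ComplexOrder

noncomputable section

section QIT
variable {n : Type*} [Fintype n] [DecidableEq n]

/-- A density matrix: positive semidefinite with unit trace. -/
def IsDensity (ρ : Matrix n n ℂ) : Prop := ρ.PosSemidef ∧ ρ.trace = 1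

/-- Apply a real function to a Hermitian matrix via its spectral decomposition
(junk value `0` on non-Hermitian matrices). -/
def matFun (f : ℝ → ℝ) (A : Matrix n n ℂ) : Matrix n n ℂ :=
  if h : A.IsHermitian then
    (h.eigenvectorUnitary : Matrix n n ℂ) *
      Matrix.diagonal (fun i => (f (h.eigenvalues i) : ℂ)) *
      ((h.eigenvectorUnitary : Matrix n n ℂ))ᴴ
  else 0

/-- von Neumann entropy (in bits). -/
def vnEntropy (A : Matrix n n ℂ) : ℝ :=
  if h : A.IsHermitian then (∑ i, Real.negMulLog (h.eigenvalues i)) / Real.log 2 else 0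

/-- Quantum relative entropy `S(ρ‖σ) = Tr ρ (log ρ − log σ)` (in bits). -/
def relEntropy (ρ σ : Matrix n n ℂ) : ℝ :=
  ((ρ * (matFun Real.log ρ - matFun Real.log σ)).trace).re / Real.log 2

/-- Trace norm of a Hermitian matrix: sum of absolute values of eigenvalues. -/
def traceNorm (A : Matrix n n ℂ) : ℝ :=
  if h : A.IsHermitian then ∑ i, |h.eigenvalues i| else 0

end QIT

section Bipartite
variable {a b : Type*} [Fintype a] [Fintype b] [DecidableEq a] [DecidableEq b]

/-- Partial trace over the second subsystem. -/
def ptraceR (M : Matrix (a × b) (a × b) ℂ) : Matrix a a ℂ :=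
  fun i j => ∑ k, M (i, k) (j, k)

/-- Partial trace over the first subsystem. -/
def ptraceL (M : Matrix (a × b) (a × b) ℂ) : Matrix b b ℂ :=
  fun i j => ∑ k, M (k, i) (k, j)

/-- Quantum mutual information `I(A:B) = S(A) + S(B) − S(AB)` of a bipartite state. -/
def mutualInfo (ρ : Matrix (a × b) (a × b) ℂ) : ℝ :=
  vnEntropy (ptraceR ρ) + vnEntropy (ptraceL ρ) - vnEntropy ρ

end Bipartite

section CQ
variable {X m : Type*} [Fintype X] [Fintype m] [DecidableEq X] [DecidableEq m]

/-- The classical-quantum state `E_{x←p}[|x⟩⟨x| ⊗ ρ_x]`. -/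
def cqState (p : X → ℝ) (ρ : X → Matrix m m ℂ) : Matrix (X × m) (X × m) ℂ :=
  fun xi yj => if xi.1 = yj.1 then (p xi.1 : ℂ) * ρ xi.1 xi.2 yj.2 else 0

end CQ

/-- Probability distributions on a finite type. -/
def FinDist (X : Type*) [Fintype X] : Type _ :=
  {p : X → ℝ // (∀ x, 0 ≤ p x) ∧ ∑ x, p x = 1}

instance (X : Type*) [Fintype X] [Nonempty X] : Nonempty (FinDist X) := by
  refine ⟨⟨fun _ => 1 / Fintype.card X, fun x => by positivity, ?_⟩⟩
  have h : (Fintype.card X : ℝ) ≠ 0 := by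
    exact_mod_cast Fintype.card_ne_zero
  rw [Finset.sum_const, Finset.card_univ, nsmul_eq_mul]
  exact mul_one_div_cancel h

/-- Capacity of a classical-quantum channel. -/
def capacity {X m : Type*} [Fintype X] [DecidableEq X] [Fintype m] [DecidableEq m]
    (E : X → Matrix m m ℂ) : ℝ :=
  ⨆ p : FinDist X, mutualInfo (cqState p.1 E)

/-- Kullback–Leibler divergence (in bits) between finitely supported distributions. -/
def klDiv {Y : Type*} [Fintype Y] (P Q : Y → ℝ) : ℝ :=
  ∑ y, P y * Real.logb 2 (P y / Q y)

/-- ℓ₁ distance between distributions. -/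
def l1Dist {Y : Type*} [Fintype Y] (P Q : Y → ℝ) : ℝ := ∑ y, |P y - Q y|

/-- Binary entropy function (in bits). -/
def binH (p : ℝ) : ℝ := Real.binEntropy p / Real.log 2


section AuxRS

open Finset

private lemma aux_sum_wgt (a' : ℕ → ℝ) (n : ℕ) :
    ∑ j ∈ Finset.range n, a' j * ∏ i ∈ Finset.range j, (1 - a' i)
      = 1 - ∏ i ∈ Finset.range n, (1 - a' i) := by
  induction n with
  | zero => simp
  | succ n ih => rw [Finset.sum_range_succ, Finset.prod_range_succ, ih]; ring

private lemma aux_sum_prod {Y : Type*} [Fintype Y] {N : ℕ} (g : Fin N → Y → ℝ) :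
    ∑ s : Fin N → Y, ∏ i, g i (s i) = ∏ i, ∑ z, g i z :=
  (Fintype.prod_sum g).symm

private lemma aux_prod_ite_lt {N j : ℕ} (hj : j ≤ N) (f : ℕ → ℝ) :
    (∏ i : Fin N, if (i : ℕ) < j then f (i : ℕ) else 1) = ∏ i ∈ Finset.range j, f i := by
  rw [Fin.prod_univ_eq_prod_range (fun n => if n < j then f n else 1) N,
    ← Finset.prod_subset (Finset.range_subset_range.2 hj)
      (fun x _ hx => if_neg (fun hlt => hx (Finset.mem_range.2 hlt)))]
  exact Finset.prod_congr rfl fun i hi => if_pos (Finset.mem_range.1 hi)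

private lemma aux_sum_fin_cutoff {mm K : ℕ} (hK : K + 1 ≤ mm) (F : ℕ → ℝ)
    (hF : ∀ j, K < j → F j = 0) :
    ∑ t : Fin mm, F (t : ℕ) = ∑ j ∈ Finset.range K, F j + F K := by
  rw [Fin.sum_univ_eq_sum_range F mm,
    ← Finset.sum_subset (Finset.range_subset_range.2 hK)
      (fun x _ hx => hF x (by simpa using Finset.mem_range.not.1 hx)),
    Finset.sum_range_succ]

variable {Y : Type} [Fintype Y] [DecidableEq Y]

private def sbF (y₀ : Y) {N : ℕ} (s : Fin N → Y) (j : ℕ) : Y :=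
  if h : j < N then s ⟨j, h⟩ else y₀

private def wgtF (a : Y → ℝ) (y₀ : Y) {N : ℕ} (s : Fin N → Y) (j : ℕ) : ℝ :=
  a (sbF y₀ s j) * ∏ i ∈ Finset.range j, (1 - a (sbF y₀ s i))

private lemma wgtF_nonneg {a : Y → ℝ} (ha0 : ∀ y, 0 ≤ a y) (ha1 : ∀ y, a y ≤ 1)
    (y₀ : Y) {N : ℕ} (s : Fin N → Y) (j : ℕ) : 0 ≤ wgtF a y₀ s j := by
  refine mul_nonneg (ha0 _) (Finset.prod_nonneg fun i _ => by linarith [ha1 (sbF y₀ s i)])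

private lemma sum_wgtF (a : Y → ℝ) (y₀ : Y) {N : ℕ} (s : Fin N → Y) (n : ℕ) :
    ∑ j ∈ Finset.range n, wgtF a y₀ s j = 1 - ∏ i ∈ Finset.range n, (1 - a (sbF y₀ s i)) :=
  aux_sum_wgt (fun i => a (sbF y₀ s i)) n

private lemma sum_wgtF_le_one {a : Y → ℝ} (ha0 : ∀ y, 0 ≤ a y) (ha1 : ∀ y, a y ≤ 1)
    (y₀ : Y) {N : ℕ} (s : Fin N → Y) (n : ℕ) :
    ∑ j ∈ Finset.range n, wgtF a y₀ s j ≤ 1 := by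
  rw [sum_wgtF]
  have : (0:ℝ) ≤ ∏ i ∈ Finset.range n, (1 - a (sbF y₀ s i)) :=
    Finset.prod_nonneg fun i _ => by linarith [ha1 (sbF y₀ s i)]
  linarith

private def encF (a : Y → ℝ) (y₀ : Y) (K : ℕ) {N mm : ℕ} (s : Fin N → Y) (t : Fin mm) : ℝ :=
  if (t : ℕ) < K then wgtF a y₀ s t
  else if (t : ℕ) = K then 1 - ∑ j ∈ Finset.range K, wgtF a y₀ s j else 0

private def decF (y₀ : Y) (K : ℕ) {N mm : ℕ} (s : Fin N → Y) (t : Fin mm) : Y :=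
  if (t : ℕ) < K then sbF y₀ s t else y₀

private lemma encF_nonneg {a : Y → ℝ} (ha0 : ∀ y, 0 ≤ a y) (ha1 : ∀ y, a y ≤ 1)
    (y₀ : Y) (K : ℕ) {N mm : ℕ} (s : Fin N → Y) (t : Fin mm) : 0 ≤ encF a y₀ K s t := by
  unfold encF
  split
  · exact wgtF_nonneg ha0 ha1 y₀ s t
  split
  · linarith [sum_wgtF_le_one ha0 ha1 y₀ s K]
  · exact le_refl 0

private lemma encF_sum (a : Y → ℝ) (y₀ : Y) {K N mm : ℕ} (hK : K + 1 ≤ mm) (s : Fin N → Y) :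
    ∑ t : Fin mm, encF a y₀ K s t = 1 := by
  unfold encF
  rw [aux_sum_fin_cutoff hK
    (fun j => if j < K then wgtF a y₀ s j
      else if j = K then 1 - ∑ j ∈ Finset.range K, wgtF a y₀ s j else 0)
    (fun j hj => by simp [Nat.lt_asymm hj, Nat.ne_of_gt hj])]
  rw [Finset.sum_congr rfl (fun j hj => if_pos (Finset.mem_range.1 hj))]
  simp

private lemma innerF_eq (a : Y → ℝ) (y₀ : Y) {K N mm : ℕ} (hK : K + 1 ≤ mm)
    (s : Fin N → Y) (y : Y) :
    ∑ t : Fin mm, encF a y₀ K s t * (if decF y₀ K s t = y then 1 else 0)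
      = (∑ j ∈ Finset.range K, wgtF a y₀ s j * (if sbF y₀ s j = y then 1 else 0))
        + (1 - ∑ j ∈ Finset.range K, wgtF a y₀ s j) * (if y₀ = y then 1 else 0) := by
  unfold encF decF
  rw [aux_sum_fin_cutoff hK
    (fun j => (if j < K then wgtF a y₀ s j
      else if j = K then 1 - ∑ j ∈ Finset.range K, wgtF a y₀ s j else 0)
      * (if (if j < K then sbF y₀ s j else y₀) = y then 1 else 0))
    (fun j hj => by simp [Nat.lt_asymm hj, Nat.ne_of_gt hj])]
  rw [Finset.sum_congr rfl (fun j hj => by rw [if_pos (Finset.mem_range.1 hj),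
    if_pos (Finset.mem_range.1 hj)])]
  simp

private lemma expect_wgtF {N : ℕ} (Q a : Y → ℝ) (hQs : ∑ z, Q z = 1) (y₀ : Y)
    (f : Y → ℝ) {j : ℕ} (hj : j < N) :
    ∑ s : Fin N → Y, (∏ i, Q (s i)) * (wgtF a y₀ s j * f (sbF y₀ s j))
      = (1 - ∑ z, Q z * a z) ^ j * ∑ z, Q z * a z * f z := by
  set jf : Fin N := ⟨j, hj⟩ with hjfdef
  have key : ∀ s : Fin N → Y,
      (∏ i, Q (s i)) * (wgtF a y₀ s j * f (sbF y₀ s j)) =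
      ∏ i : Fin N, (Q (s i) * ((if (i : ℕ) < j then 1 - a (s i) else 1)
        * (if i = jf then a (s i) * f (s i) else 1))) := by
    intro s
    have h1 : (∏ i : Fin N, if (i : ℕ) < j then 1 - a (s i) else 1)
        = ∏ i ∈ Finset.range j, (1 - a (sbF y₀ s i)) := by
      rw [← aux_prod_ite_lt (le_of_lt hj) (fun n => 1 - a (sbF y₀ s n))]
      exact Finset.prod_congr rfl fun i _ => by simp [sbF, i.isLt]
    have h2 : (∏ i : Fin N, if i = jf then a (s i) * f (s i) else 1)
        = a (s jf) * f (s jf) := by simp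
    have h3 : sbF y₀ s j = s jf := dif_pos hj
    rw [Finset.prod_mul_distrib, Finset.prod_mul_distrib, h1, h2, wgtF, h3]
    ring
  rw [Finset.sum_congr rfl fun s _ => key s,
    aux_sum_prod (fun i z => Q z * ((if (i : ℕ) < j then 1 - a z else 1)
      * (if i = jf then a z * f z else 1)))]
  have h4 : ∀ i : Fin N, (∑ z, Q z * ((if (i : ℕ) < j then 1 - a z else 1)
      * (if i = jf then a z * f z else 1)))
      = (if (i : ℕ) < j then 1 - ∑ z, Q z * a z else 1)
        * (if i = jf then ∑ z, Q z * a z * f z else 1) := by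
    intro i
    by_cases hij : (i : ℕ) < j
    · have hne : i ≠ jf := by
        rintro rfl
        exact lt_irrefl j hij
      simp only [if_pos hij]
      simp only [if_neg hne, mul_one]
      rw [Finset.sum_congr rfl fun z (_ : z ∈ Finset.univ) => (by ring :
        Q z * (1 - a z) = Q z - Q z * a z), Finset.sum_sub_distrib, hQs]
    · simp only [if_neg hij]
      by_cases hie : i = jf
      · simp only [if_pos hie, one_mul]
        exact Finset.sum_congr rfl fun z _ => by ring
      · simp only [if_neg hie, one_mul, mul_one]
        exact hQs
  rw [Finset.prod_congr rfl fun i _ => h4 i, Finset.prod_mul_distrib,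
    aux_prod_ite_lt (le_of_lt hj) (fun _ => 1 - ∑ z, Q z * a z),
    Finset.prod_const, Finset.card_range]
  simp


end AuxRS

section AuxRS2
open Finset

private lemma aux_pt_lb {p q : ℝ} (hp : 0 ≤ p) (hq : 0 ≤ q) (habs : q = 0 → p = 0) :
    -q ≤ p * Real.logb 2 (p / q) := by
  rcases eq_or_lt_of_le hp with hp0 | hp0
  · simp [← hp0]; linarith
  have hq0 : 0 < q := by
    rcases eq_or_lt_of_le hq with h | h
    · exact absurd (habs h.symm) (ne_of_gt hp0)
    · exact h
  have ht : 0 < p / q := div_pos hp0 hq0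
  -- t * log t ≥ -exp(-1)
  have hkey : -Real.exp (-1) ≤ (p / q) * Real.log (p / q) := by
    have h := Real.add_one_le_exp (-Real.log (p / q) - 1)
    rw [show -Real.log (p/q) - 1 + 1 = -Real.log (p/q) by ring, Real.exp_sub,
      Real.exp_neg, Real.exp_log ht] at h
    have := mul_le_mul_of_nonneg_left h (le_of_lt ht)
    rw [mul_comm] at this
    have h2 : (p/q)⁻¹ / Real.exp 1 * (p/q) = Real.exp (-1) := by
      rw [Real.exp_neg]; field_simp
    nlinarith [Real.exp_pos 1]
  have hexp : Real.exp (-1) ≤ Real.log 2 := by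
    have h1 := Real.exp_one_gt_d9
    have h2 := Real.log_two_gt_d9
    have he : (0:ℝ) < Real.exp 1 := Real.exp_pos 1
    have h3 : (Real.exp 1)⁻¹ * Real.exp 1 = 1 := inv_mul_cancel₀ (ne_of_gt he)
    have h4 : (0:ℝ) ≤ (Real.exp 1)⁻¹ := by positivity
    rw [Real.exp_neg]
    nlinarith
  have hlog2 : 0 < Real.log 2 := Real.log_pos (by norm_num)
  have hmain : -(q * Real.log 2) ≤ p * Real.log (p / q) := by
    have heq : p * Real.log (p / q) = q * ((p / q) * Real.log (p / q)) := by
      field_simp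
    rw [heq]
    nlinarith [hkey]
  rw [Real.logb, ← mul_div_assoc, le_div_iff₀ hlog2]
  nlinarith

private lemma aux_gibbs {Y : Type*} [Fintype Y] (P Q : Y → ℝ)
    (hP : ∀ y, 0 ≤ P y) (hPs : ∑ y, P y = 1) (hQ : ∀ y, 0 ≤ Q y) (hQs : ∑ y, Q y = 1)
    (habs : ∀ y, Q y = 0 → P y = 0) : 0 ≤ klDiv P Q := by
  have hlog2 : 0 < Real.log 2 := Real.log_pos (by norm_num)
  have hpt : ∀ y, P y - Q y ≤ P y * Real.log (P y / Q y) := by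
    intro y
    rcases eq_or_lt_of_le (hP y) with hp0 | hp0
    · simp [← hp0]; exact hQ y
    have hq0 : 0 < Q y := by
      rcases eq_or_lt_of_le (hQ y) with h | h
      · exact absurd (habs y h.symm) (ne_of_gt hp0)
      · exact h
    have h := Real.log_le_sub_one_of_pos (div_pos hq0 hp0)
    have hrw : Real.log (Q y / P y) = -Real.log (P y / Q y) := by
      rw [← Real.log_inv]; congr 1; field_simp
    rw [hrw] at h
    have h2 := mul_le_mul_of_nonneg_left h (hP y)
    have h3 : P y * (Q y / P y - 1) = Q y - P y := by field_simp
    nlinarith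
  have hsum : 0 ≤ ∑ y, P y * Real.log (P y / Q y) := by
    have := Finset.sum_le_sum (fun y (_ : y ∈ Finset.univ) => hpt y)
    rw [Finset.sum_sub_distrib, hPs, hQs] at this
    linarith
  unfold klDiv
  have : ∀ y : Y, P y * Real.logb 2 (P y / Q y) = P y * Real.log (P y / Q y) / Real.log 2 := by
    intro y; rw [Real.logb, mul_div_assoc]
  rw [Finset.sum_congr rfl fun y _ => this y, ← Finset.sum_div]
  positivity

private lemma aux_markov {Y : Type*} [Fintype Y] [DecidableEq Y] (P Q : Y → ℝ)
    (hP : ∀ y, 0 ≤ P y) (hQ : ∀ y, 0 ≤ Q y) (hQs : ∑ y, Q y = 1)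
    (habs : ∀ y, Q y = 0 → P y = 0) (L : ℝ) (hL : 0 < L)
    [DecidablePred fun y : Y => (2:ℝ) ^ L * Q y < P y] :
    ∑ y ∈ Finset.univ.filter (fun y => (2:ℝ) ^ L * Q y < P y), P y ≤ (klDiv P Q + 1) / L := by
  set bad := Finset.univ.filter (fun y : Y => (2:ℝ) ^ L * Q y < P y) with hbad
  have hM0 : (0:ℝ) < (2:ℝ) ^ L := Real.rpow_pos_of_pos (by norm_num) L
  have hstep1 : ∀ y ∈ bad, L * P y ≤ P y * Real.logb 2 (P y / Q y) := by
    intro y hy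
    rw [hbad, Finset.mem_filter] at hy
    have hlt := hy.2
    have hq0 : 0 < Q y := by
      rcases eq_or_lt_of_le (hQ y) with h | h
      · rw [habs y h.symm] at hlt; nlinarith
      · exact h
    have hratio : (2:ℝ) ^ L ≤ P y / Q y := by
      rw [le_div_iff₀ hq0]; nlinarith
    have hlogb : L ≤ Real.logb 2 (P y / Q y) := by
      have h := Real.logb_le_logb_of_le (by norm_num : (1:ℝ) < 2) hM0 hratio
      rwa [Real.logb_rpow (by norm_num) (by norm_num)] at h
    nlinarith [hP y, mul_le_mul_of_nonneg_left hlogb (hP y)]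
  have hstep2 : ∑ y ∈ bad, P y * Real.logb 2 (P y / Q y) ≤ klDiv P Q + 1 := by
    have hsplit := Finset.sum_filter_add_sum_filter_not Finset.univ
      (fun y : Y => (2:ℝ) ^ L * Q y < P y) (fun y => P y * Real.logb 2 (P y / Q y))
    have hlb : ∀ y ∈ Finset.univ.filter (fun y : Y => ¬ ((2:ℝ) ^ L * Q y < P y)),
        -Q y ≤ P y * Real.logb 2 (P y / Q y) :=
      fun y _ => aux_pt_lb (hP y) (hQ y) (habs y)
    have h1 := Finset.sum_le_sum hlb
    have h2 : ∑ y ∈ Finset.univ.filter (fun y : Y => ¬ ((2:ℝ) ^ L * Q y < P y)), Q y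
        ≤ ∑ y, Q y :=
      Finset.sum_le_sum_of_subset_of_nonneg (Finset.filter_subset _ _) (fun y _ _ => hQ y)
    rw [Finset.sum_neg_distrib] at h1
    unfold klDiv
    rw [hbad]
    rw [hQs] at h2
    linarith [hsplit]
  have hL' : L * ∑ y ∈ bad, P y ≤ klDiv P Q + 1 := by
    rw [Finset.mul_sum]
    exact le_trans (Finset.sum_le_sum hstep1) hstep2
  rw [le_div_iff₀ hL]
  linarith


end AuxRS2

set_option maxHeartbeats 2000000 in
/-- rejection-sampling compression. Sharing `N = 2^{2rk/δ}` i.i.d.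
public samples from `Q` (with `r = 4/δ`, `k = D(P‖Q)+1`), Alice can send
`O(c/δ² + log(1/δ)/δ²)` bits after which Referee outputs a sample from some `P'`
with `‖P − P'‖₁ ≤ δ`. -/
theorem stmt13_rejection_sampling_compression :
    ∃ C : ℝ, 0 < C ∧
      ∀ (Y : Type) [Fintype Y] [DecidableEq Y] (P Q : Y → ℝ) (δ : ℝ),
        (∀ y, 0 ≤ P y) → (∑ y, P y = 1) → (∀ y, 0 ≤ Q y) → (∑ y, Q y = 1) →
        (∀ y, Q y = 0 → P y = 0) → 0 < δ → δ < 1 →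
        ∃ m : ℕ,
          (m : ℝ) ≤ C * (klDiv P Q / δ ^ 2 + Real.logb 2 (1 / δ) / δ ^ 2 + 1) ∧
          ∃ (enc : (Fin ⌈(2 : ℝ) ^ (2 * (4 / δ) * (klDiv P Q + 1) / δ)⌉₊ → Y) →
                Fin (2 ^ m) → ℝ)
            (dec : (Fin ⌈(2 : ℝ) ^ (2 * (4 / δ) * (klDiv P Q + 1) / δ)⌉₊ → Y) →
                Fin (2 ^ m) → Y),
            (∀ s t, 0 ≤ enc s t) ∧ (∀ s, ∑ t, enc s t = 1) ∧
            l1Dist P (fun y =>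
              ∑ s : Fin ⌈(2 : ℝ) ^ (2 * (4 / δ) * (klDiv P Q + 1) / δ)⌉₊ → Y,
                (∏ i, Q (s i)) * ∑ t, enc s t * (if dec s t = y then 1 else 0)) ≤ δ := by
  classical
  refine ⟨100, by norm_num, ?_⟩
  intro Y _ _ P Q δ hP hPs hQ hQs habs hδ hδ1
  set c := klDiv P Q with hc_def
  have hc : 0 ≤ c := aux_gibbs P Q hP hPs hQ hQs habs
  have hlog2 : 0 < Real.log 2 := Real.log_pos (by norm_num)
  have hc1 : (0:ℝ) < c + 1 := by linarith
  set L : ℝ := 4 * (c + 1) / δ with hL_def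
  have hL : 0 < L := by positivity
  set M : ℝ := (2:ℝ) ^ L with hM_def
  have hM0 : (0:ℝ) < M := Real.rpow_pos_of_pos (by norm_num) L
  have hM1 : (1:ℝ) ≤ M := Real.one_le_rpow (by norm_num) (le_of_lt hL)
  -- nonempty
  have hYne : Nonempty Y := by
    by_contra h
    rw [not_nonempty_iff] at h
    rw [Finset.univ_eq_empty, Finset.sum_empty] at hPs
    norm_num at hPs
  obtain ⟨y₀⟩ := hYne
  -- truncated distribution
  set Pt : Y → ℝ := fun y => min (M * Q y) (P y) with hPt_def
  have hPt0 : ∀ y, 0 ≤ Pt y := fun y => le_min (mul_nonneg (le_of_lt hM0) (hQ y)) (hP y)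
  have hPtP : ∀ y, Pt y ≤ P y := fun y => min_le_right _ _
  set w : ℝ := ∑ y, Pt y with hw_def
  have hw1 : w ≤ 1 := by rw [hw_def, ← hPs]; exact Finset.sum_le_sum fun y _ => hPtP y
  -- Markov bound
  have h1w : 1 - w ≤ δ / 4 := by
    have hmk := aux_markov P Q hP hQ hQs habs L hL
    have hsum : 1 - w = ∑ y, (P y - Pt y) := by
      rw [Finset.sum_sub_distrib, hPs, hw_def]
    have hsplit : ∑ y, (P y - Pt y)
        ≤ ∑ y ∈ Finset.univ.filter (fun y => (2:ℝ) ^ L * Q y < P y), P y := by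
      rw [← Finset.sum_filter_add_sum_filter_not Finset.univ
        (fun y => (2:ℝ) ^ L * Q y < P y) (fun y => P y - Pt y)]
      have hz : ∑ y ∈ Finset.univ.filter (fun y => ¬ ((2:ℝ) ^ L * Q y < P y)),
          (P y - Pt y) = 0 := by
        refine Finset.sum_eq_zero fun y hy => ?_
        rw [Finset.mem_filter] at hy
        have : Pt y = P y := by
          rw [hPt_def]
          exact min_eq_right (by rw [← hM_def] at hy; exact not_lt.1 hy.2)
        linarith [this]
      rw [hz, add_zero]
      refine Finset.sum_le_sum fun y hy => ?_
      linarith [hPt0 y]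
    have hfin : (c + 1) / L = δ / 4 := by
      rw [hL_def]
      field_simp
    rw [← hc_def] at hmk
    linarith
  have hw34 : 3/4 ≤ w := by linarith
  -- acceptance probability
  set a : Y → ℝ := fun y => if Q y = 0 then 0 else min 1 (P y / (M * Q y)) with ha_def
  have ha0 : ∀ y, 0 ≤ a y := by
    intro y
    rw [ha_def]
    dsimp only
    split
    · exact le_refl 0
    · exact le_min (by norm_num) (div_nonneg (hP y) (mul_nonneg (le_of_lt hM0) (hQ y)))
  have ha1 : ∀ y, a y ≤ 1 := by
    intro y
    rw [ha_def]
    dsimp only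
    split
    · norm_num
    · exact min_le_left _ _
  have hQa : ∀ y, Q y * a y = Pt y / M := by
    intro y
    rw [ha_def, hPt_def]
    dsimp only
    by_cases hq : Q y = 0
    · rw [if_pos hq, hq, habs y hq]
      simp
    · rw [if_neg hq]
      have hq0 : 0 < Q y := lt_of_le_of_ne (hQ y) (Ne.symm hq)
      have hMQ : 0 < M * Q y := by positivity
      by_cases hmin : P y / (M * Q y) ≤ 1
      · rw [min_eq_right hmin, min_eq_right (by rw [div_le_one hMQ] at hmin; exact hmin)]
        field_simp
      · push_neg at hmin
        rw [min_eq_left (le_of_lt hmin), min_eq_left]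
        · field_simp
        · rw [lt_div_iff₀ hMQ, one_mul] at hmin
          exact le_of_lt hmin
  set p' : ℝ := ∑ z, Q z * a z with hp'_def
  have hp'w : p' = w / M := by
    rw [hp'_def, hw_def, Finset.sum_div]
    exact Finset.sum_congr rfl fun y _ => hQa y
  have hp'1 : p' ≤ 1 := by
    rw [hp'w, div_le_one hM0]; linarith
  have hp'lb : 3 / (4 * M) ≤ p' := by
    rw [hp'w, div_le_div_iff₀ (by positivity) hM0]
    nlinarith
  have hp'0 : 0 ≤ p' := le_trans (by positivity) hp'lb
  -- choice of m
  set B : ℝ := Real.logb 2 (1/δ) with hB_def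
  have hδinv1 : (1:ℝ) ≤ 1/δ := by rw [le_div_iff₀ hδ]; linarith
  have hB0 : 0 ≤ B := Real.logb_nonneg (by norm_num) hδinv1
  have hlogb4δ : Real.logb 2 (4/δ) = 2 + B := by
    rw [hB_def, show (4:ℝ)/δ = 4 * (1/δ) by ring,
      Real.logb_mul (by norm_num) (by positivity)]
    congr 1
    rw [show (4:ℝ) = 2^(2:ℕ) by norm_num, Real.logb_pow,
      Real.logb_self_eq_one (by norm_num)]
    norm_num
  set E : ℝ := L + Real.logb 2 (4/δ) + 3 with hE_def
  have hE0 : 0 ≤ E := by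
    rw [hE_def, hlogb4δ]
    have : 0 ≤ L := le_of_lt hL
    linarith
  refine ⟨⌈E⌉₊, ?_, ?_⟩
  · -- bound on m
    have hmE : (⌈E⌉₊:ℝ) < E + 1 := Nat.ceil_lt_add_one hE0
    have hδ2 : (0:ℝ) < δ^2 := by positivity
    have hδ2δ : δ^2 ≤ δ := by nlinarith
    have hiv : 1/δ ≤ 1/δ^2 := one_div_le_one_div_of_le hδ2 hδ2δ
    have hcdiv : c/δ ≤ c/δ^2 := by
      rw [div_eq_mul_one_div c δ, div_eq_mul_one_div c (δ^2)]
      exact mul_le_mul_of_nonneg_left hiv hc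
    have hone : (1:ℝ) ≤ 1/δ^2 := by
      rw [le_div_iff₀ hδ2]; nlinarith
    have hBB : B ≤ B/δ^2 := by
      rw [div_eq_mul_one_div]
      nlinarith
    have h4δ : 4*(1/δ) ≤ 8 + 2*(B/δ^2) := by
      rcases le_or_gt δ (1/2) with hhalf | hhalf
      · have h2δ : (2:ℝ) ≤ 1/δ := by rw [le_div_iff₀ hδ]; linarith
        have hB1 : 1 ≤ B := by
          have h := Real.logb_le_logb_of_le (by norm_num : (1:ℝ) < 2)
            (by norm_num : (0:ℝ) < 2) h2δ
          rw [Real.logb_self_eq_one (by norm_num : (1:ℝ) < 2)] at h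
          rw [hB_def]
          exact h
        have ha' : 4*(1/δ) ≤ 2*(1/δ^2) := by
          rw [mul_one_div, mul_one_div, div_le_div_iff₀ hδ hδ2]; nlinarith
        have hb' : 1/δ^2 ≤ B*(1/δ^2) := le_mul_of_one_le_left (by positivity) hB1
        have hc' : B*(1/δ^2) = B/δ^2 := by ring
        linarith
      · have ha' : 4*(1/δ) ≤ 8 := by
          rw [mul_one_div, div_le_iff₀ hδ]; nlinarith
        have hb' : 0 ≤ 2*(B/δ^2) := by positivity
        linarith
    have hE1 : E + 1 = 4*(c/δ) + 4*(1/δ) + B + 6 := by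
      rw [hE_def, hlogb4δ, hL_def]
      field_simp
      ring
    rw [hE1] at hmE
    have hnn1 : 0 ≤ c / δ^2 := div_nonneg hc (le_of_lt hδ2)
    have hnn2 : 0 ≤ B / δ^2 := div_nonneg hB0 (le_of_lt hδ2)
    linarith [hcdiv, hBB, h4δ, hmE, hnn1, hnn2]
  -- the protocol
  set N : ℕ := ⌈(2:ℝ) ^ (2 * (4/δ) * (c + 1) / δ)⌉₊ with hN_def
  set K : ℕ := min (2^(⌈E⌉₊) - 1) N with hK_def
  have h2m1 : 1 ≤ 2^(⌈E⌉₊) := Nat.one_le_two_pow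
  have hK2m : K + 1 ≤ 2^(⌈E⌉₊) := by
    have := min_le_left (2^(⌈E⌉₊) - 1) N
    omega
  have hKN : K ≤ N := min_le_right _ _
  -- size of K
  have hδ4 : (4:ℝ) ≤ 4/δ := by rw [le_div_iff₀ hδ]; nlinarith
  have hlog4δ0 : 0 ≤ Real.log (4/δ) := Real.log_nonneg (by linarith)
  have hlog4δub : Real.log (4/δ) ≤ 4/δ :=
    le_trans (Real.log_le_sub_one_of_pos (by positivity)) (by linarith)
  have hKbig : (4/3) * M * Real.log (4/δ) ≤ (K:ℝ) := by
    have hcast : (K:ℝ) = min (((2^(⌈E⌉₊) - 1 : ℕ)):ℝ) ((N:ℕ):ℝ) := by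
      rw [hK_def]; push_cast [Nat.cast_min]; rfl
    rw [hcast]
    refine le_min ?_ ?_
    · -- vs 2^m - 1
      have hc2 : (((2^(⌈E⌉₊) - 1 : ℕ)):ℝ) = (2:ℝ)^(⌈E⌉₊:ℕ) - 1 := by
        push_cast [Nat.cast_sub h2m1]
        norm_num
      rw [hc2]
      have h2mE : (2:ℝ)^E ≤ (2:ℝ)^((⌈E⌉₊:ℕ):ℝ) :=
        Real.rpow_le_rpow_of_exponent_le (by norm_num) (Nat.le_ceil E)
      rw [Real.rpow_natCast] at h2mE
      have hEval : (2:ℝ)^E = M * ((4/δ) * 8) := by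
        rw [hE_def, Real.rpow_add (by norm_num : (0:ℝ) < 2),
          Real.rpow_add (by norm_num : (0:ℝ) < 2),
          Real.rpow_logb (by norm_num) (by norm_num) (by positivity),
          show ((3:ℝ)) = ((3:ℕ):ℝ) by norm_num, Real.rpow_natCast, ← hM_def]
        norm_num
        ring
      rw [hEval] at h2mE
      have hX : (4:ℝ) ≤ M * (4/δ) := by nlinarith
      nlinarith [mul_le_mul_of_nonneg_left hlog4δub
        (by positivity : (0:ℝ) ≤ (4/3) * M)]
    · -- vs N
      have hNR : (2:ℝ) ^ (2 * (4/δ) * (c + 1) / δ) ≤ ((N:ℕ):ℝ) := by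
        rw [hN_def]; exact Nat.le_ceil _
      set u : ℝ := 1/δ with hu_def
      have hu1 : (1:ℝ) ≤ u := hδinv1
      set gap : ℝ := 8*(c+1)*u^2 - 4*(c+1)*u with hgap_def
      have hLgap : L + gap = 2 * (4/δ) * (c + 1) / δ := by
        rw [hgap_def, hL_def, hu_def]
        field_simp
        ring
      have hgoal2 : (4/3) * Real.log (4/δ) ≤ (2:ℝ)^gap := by
        have hexp : 1 + gap * Real.log 2 ≤ (2:ℝ)^gap := by
          rw [Real.rpow_def_of_pos (by norm_num : (0:ℝ) < 2)]
          have h := Real.add_one_le_exp (Real.log 2 * gap)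
          linarith
        have hu0 : (0:ℝ) < u := by linarith
        have hlogu : Real.log u ≤ u - 1 := Real.log_le_sub_one_of_pos hu0
        have hlog4δ' : Real.log (4/δ) = Real.log 4 + Real.log u := by
          rw [show (4:ℝ)/δ = 4 * u by rw [hu_def]; ring,
            Real.log_mul (by norm_num) (by linarith)]
        have hlog4 : Real.log 4 = 2 * Real.log 2 := by
          rw [show (4:ℝ) = 2^(2:ℕ) by norm_num, Real.log_pow]
          push_cast; ring
        have hcg : 8*u^2 - 4*u ≤ gap := by
          have h8 : 0 ≤ 8*u^2 - 4*u := by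
            nlinarith [mul_nonneg (by linarith : (0:ℝ) ≤ u - 1) (by linarith : (0:ℝ) ≤ u)]
          rw [hgap_def]
          nlinarith [mul_nonneg hc h8]
        have l2 := Real.log_two_gt_d9
        nlinarith [sq_nonneg (u-1)]
      have hMgap : M * (2:ℝ)^gap = (2:ℝ) ^ (2 * (4/δ) * (c + 1) / δ) := by
        rw [hM_def, ← Real.rpow_add (by norm_num : (0:ℝ) < 2), hLgap]
      calc (4/3) * M * Real.log (4/δ) = M * ((4/3) * Real.log (4/δ)) := by ring
        _ ≤ M * (2:ℝ)^gap := mul_le_mul_of_nonneg_left hgoal2 (le_of_lt hM0)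
        _ = (2:ℝ) ^ (2 * (4/δ) * (c + 1) / δ) := hMgap
        _ ≤ ((N:ℕ):ℝ) := hNR
  -- failure probability
  have hKp : Real.log (4/δ) ≤ p' * K := by
    have h2 : 3/(4*M) * ((4/3)*M*Real.log (4/δ)) = Real.log (4/δ) := by
      field_simp
    calc Real.log (4/δ) = 3/(4*M) * ((4/3)*M*Real.log (4/δ)) := h2.symm
      _ ≤ 3/(4*M) * K := mul_le_mul_of_nonneg_left hKbig (by positivity)
      _ ≤ p' * K := mul_le_mul_of_nonneg_right hp'lb (Nat.cast_nonneg K)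
  set ε : ℝ := (1 - p')^K with hε_def
  have hε0 : 0 ≤ ε := pow_nonneg (by linarith) K
  have hεδ : ε ≤ δ/4 := by
    have h1 : (1 - p')^K ≤ Real.exp (-p')^K := by
      refine pow_le_pow_left₀ (by linarith) ?_ K
      linarith [Real.add_one_le_exp (-p')]
    rw [← Real.exp_nat_mul] at h1
    have h2 : Real.exp ((K:ℝ) * (-p')) ≤ Real.exp (-Real.log (4/δ)) := by
      refine Real.exp_le_exp.mpr ?_
      nlinarith [hKp]
    rw [Real.exp_neg, Real.exp_log (by positivity : (0:ℝ) < 4/δ)] at h2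
    have h3 : ((4:ℝ)/δ)⁻¹ = δ/4 := by field_simp
    rw [h3] at h2
    rw [hε_def]
    exact le_trans h1 h2
  -- geometric sum
  set S : ℝ := ∑ j ∈ Finset.range K, (1 - p')^j with hS_def
  have hSp : S * p' = 1 - ε := by
    have h := geom_sum_mul (1 - p') K
    rw [hS_def, hε_def]
    linear_combination -h
  -- the output distribution
  refine ⟨encF a y₀ K, decF y₀ K, fun s t => encF_nonneg ha0 ha1 y₀ K s t,
    fun s => encF_sum a y₀ hK2m s, ?_⟩
  have hQ1 : ∑ s : Fin N → Y, ∏ i, Q (s i) = 1 := by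
    rw [aux_sum_prod (fun (_ : Fin N) z => Q z)]
    simp [hQs]
  have hPy : ∀ y : Y, (∑ s : Fin N → Y,
      (∏ i, Q (s i)) * ∑ t : Fin (2^(⌈E⌉₊)),
        encF a y₀ K s t * (if decF y₀ K s t = y then 1 else 0))
      = S * (Q y * a y) + ε * (if y₀ = y then 1 else 0) := by
    intro y
    have e1 : ∀ s : Fin N → Y,
        (∏ i, Q (s i)) * ∑ t : Fin (2^(⌈E⌉₊)),
          encF a y₀ K s t * (if decF y₀ K s t = y then 1 else 0)
        = (∑ j ∈ Finset.range K,
            (∏ i, Q (s i)) * (wgtF a y₀ s j * (if sbF y₀ s j = y then 1 else 0)))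
          + ((∏ i, Q (s i)) * (1 - ∑ j ∈ Finset.range K, wgtF a y₀ s j))
            * (if y₀ = y then 1 else 0) := by
      intro s
      rw [innerF_eq a y₀ hK2m s y, mul_add, Finset.mul_sum]
      ring
    rw [Finset.sum_congr rfl fun s _ => e1 s, Finset.sum_add_distrib]
    have hp1 : ∑ s : Fin N → Y, ∑ j ∈ Finset.range K,
        (∏ i, Q (s i)) * (wgtF a y₀ s j * (if sbF y₀ s j = y then 1 else 0))
        = S * (Q y * a y) := by
      rw [Finset.sum_comm]
      have hterm : ∀ j ∈ Finset.range K, (∑ s : Fin N → Y,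
          (∏ i, Q (s i)) * (wgtF a y₀ s j * (if sbF y₀ s j = y then 1 else 0)))
          = (1 - p')^j * (Q y * a y) := by
        intro j hj
        have hjN : j < N := lt_of_lt_of_le (Finset.mem_range.1 hj) hKN
        rw [expect_wgtF Q a hQs y₀ (fun z => if z = y then 1 else 0) hjN, ← hp'_def]
        congr 1
        rw [Finset.sum_congr rfl (fun z (_ : z ∈ Finset.univ) => (by
          by_cases hzy : z = y <;> simp [hzy] :
          Q z * a z * (if z = y then (1:ℝ) else 0) = if z = y then Q z * a z else 0))]
        rw [Finset.sum_ite_eq' Finset.univ y (fun z => Q z * a z)]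
        simp
      rw [Finset.sum_congr rfl hterm, ← Finset.sum_mul, ← hS_def]
    have hp2 : ∑ s : Fin N → Y,
        ((∏ i, Q (s i)) * (1 - ∑ j ∈ Finset.range K, wgtF a y₀ s j))
          * (if y₀ = y then 1 else 0)
        = ε * (if y₀ = y then 1 else 0) := by
      rw [← Finset.sum_mul]
      congr 1
      have hsplit : ∀ s : Fin N → Y,
          (∏ i, Q (s i)) * (1 - ∑ j ∈ Finset.range K, wgtF a y₀ s j)
          = (∏ i, Q (s i)) - ∑ j ∈ Finset.range K, (∏ i, Q (s i)) * wgtF a y₀ s j := by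
        intro s
        rw [mul_one_sub, Finset.mul_sum]
      rw [Finset.sum_congr rfl fun s _ => hsplit s, Finset.sum_sub_distrib, hQ1,
        Finset.sum_comm]
      have hterm : ∀ j ∈ Finset.range K,
          (∑ s : Fin N → Y, (∏ i, Q (s i)) * wgtF a y₀ s j) = (1 - p')^j * p' := by
        intro j hj
        have hjN : j < N := lt_of_lt_of_le (Finset.mem_range.1 hj) hKN
        have h := expect_wgtF Q a hQs y₀ (fun _ => 1) hjN
        simp only [mul_one] at h
        rw [h, ← hp'_def]
      rw [Finset.sum_congr rfl hterm, ← Finset.sum_mul, ← hS_def, hSp]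
      ring
    rw [hp1, hp2]
  -- the ℓ₁ bound
  have hl1eq : l1Dist P (fun y => ∑ s : Fin N → Y,
      (∏ i, Q (s i)) * ∑ t : Fin (2^(⌈E⌉₊)),
        encF a y₀ K s t * (if decF y₀ K s t = y then 1 else 0))
      = ∑ y, |P y - (S * (Q y * a y) + ε * (if y₀ = y then 1 else 0))| := by
    unfold l1Dist
    refine Finset.sum_congr rfl fun y _ => ?_
    simp only [hPy y]
  rw [hl1eq]
  have hterm : ∀ y : Y, |P y - (S * (Q y * a y) + ε * (if y₀ = y then 1 else 0))|
      ≤ (P y - Pt y) + |1 - S/M| * Pt y + ε * (if y₀ = y then 1 else 0) := by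
    intro y
    have h1 : S * (Q y * a y) = (S/M) * Pt y := by
      rw [hQa y]; ring
    have hI0 : (0:ℝ) ≤ (if y₀ = y then (1:ℝ) else 0) := by split <;> norm_num
    rw [h1]
    have habs3 : P y - ((S/M) * Pt y + ε * (if y₀ = y then 1 else 0))
        = (P y - Pt y) + ((1 - S/M) * Pt y) + (-(ε * (if y₀ = y then 1 else 0))) := by
      ring
    rw [habs3]
    refine le_trans (abs_add_le _ _) ?_
    refine add_le_add (le_trans (abs_add_le _ _) (add_le_add ?_ ?_)) ?_
    · rw [abs_of_nonneg (by linarith [hPtP y])]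
    · rw [abs_mul, abs_of_nonneg (hPt0 y)]
    · rw [abs_neg, abs_of_nonneg (mul_nonneg hε0 hI0)]
  refine le_trans (Finset.sum_le_sum fun y _ => hterm y) ?_
  rw [Finset.sum_add_distrib, Finset.sum_add_distrib, Finset.sum_sub_distrib, hPs,
    ← Finset.mul_sum, ← Finset.mul_sum, ← hw_def,
    Finset.sum_ite_eq Finset.univ y₀ (fun _ => (1:ℝ))]
  simp only [Finset.mem_univ, if_true, mul_one]
  have hmid : |1 - S/M| * w ≤ (1 - w) + ε := by
    have hw0 : (0:ℝ) ≤ w := by linarith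
    have h1 : |1 - S/M| * w = |(1 - S/M) * w| := by
      rw [abs_mul, abs_of_nonneg hw0]
    have h2 : (1 - S/M) * w = w - S * p' := by
      rw [hp'w]; ring
    rw [h1, h2, hSp]
    exact abs_le.mpr ⟨by linarith, by linarith⟩
  linarith


end
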